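/- Let d ≥ 1, 1 ≤ p < 2, and μ a probability measure on ℝ^d. For each f ∈ L²(ℝ^d, dμ), the function p ↦ (2p/(2-p)) (∫ |f|² dμ - (∫ |f|^p dμ)^{2/p}) is non-decreasing on [1,2). -/

import Mathlib

open MeasureTheory Real
open scoped ENNReal

section aux
variable {α : Type*} [MeasurableSpace α] {μ : Measure α} [IsProbabilityMeasure μ]

lemma lo_ofReal_div_eq {a b : ℝ} (ha : 0 < a) (hb : 0 < b) :
    ENNReal.ofReal a / ENNReal.ofReal (a / b) = ENNReal.ofReal b := by
  rw [eq_comm, ENNReal.eq_div_iff (by simp [ENNReal.ofReal_eq_zero]; positivity)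
    ENNReal.ofReal_ne_top, ← ENNReal.ofReal_mul (by positivity)]
  congr 1
  field_simp

/-- Key interpolation inequality. -/
lemma lo_interp (f : α → ℝ) (hf : MemLp f 2 μ) {p q : ℝ}
    (hp : 1 ≤ p) (hpq : p < q) (hq : q < 2) :
    (∫ x, |f x| ^ q ∂μ) ^ (2 / q) ≤
      (2 * (q - p) / (q * (2 - p))) * (∫ x, |f x| ^ (2 : ℝ) ∂μ) +
      (p * (2 - q) / (q * (2 - p))) * (∫ x, |f x| ^ p ∂μ) ^ (2 / p) := by
  have hp0 : (0:ℝ) < p := by linarith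
  have hq0 : (0:ℝ) < q := by linarith
  have h2p : (0:ℝ) < 2 - p := by linarith
  have h2q : (0:ℝ) < 2 - q := by linarith
  have hqp : (0:ℝ) < q - p := by linarith
  set r : ℝ := (2 - p) / (q - p) with hr
  set r' : ℝ := (2 - p) / (2 - q) with hr'
  have hr0 : 0 < r := by positivity
  have hr'0 : 0 < r' := by positivity
  have hconj : r.HolderConjugate r' := by
    rw [Real.holderConjugate_iff]; constructor
    · rw [hr, lt_div_iff₀ hqp]; linarith
    · rw [hr, hr']; field_simp; ring
  set F := fun x => |f x| ^ (2 / r) with hF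
  set G := fun x => |f x| ^ (p / r') with hG
  have h2' : (2 : ℝ≥0∞) = ENNReal.ofReal 2 := by norm_num
  have hfp : MemLp f (ENNReal.ofReal p) μ := by
    refine hf.mono_exponent ?_
    rw [h2']; exact ENNReal.ofReal_le_ofReal (by linarith)
  have hF' : MemLp F (ENNReal.ofReal r) μ := by
    have h := hf.norm_rpow_div (ENNReal.ofReal (2 / r))
    rw [h2', lo_ofReal_div_eq two_pos hr0] at h
    have ht : (ENNReal.ofReal (2 / r)).toReal = 2 / r :=
      ENNReal.toReal_ofReal (by positivity)
    simpa [hF, ht, Real.norm_eq_abs] using h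
  have hG' : MemLp G (ENNReal.ofReal r') μ := by
    have h := hfp.norm_rpow_div (ENNReal.ofReal (p / r'))
    rw [lo_ofReal_div_eq hp0 hr'0] at h
    have ht : (ENNReal.ofReal (p / r')).toReal = p / r' :=
      ENNReal.toReal_ofReal (by positivity)
    simpa [hG, ht, Real.norm_eq_abs] using h
  have hFnn : 0 ≤ᵐ[μ] F := Filter.Eventually.of_forall fun x => by
    exact Real.rpow_nonneg (abs_nonneg _) _
  have hGnn : 0 ≤ᵐ[μ] G := Filter.Eventually.of_forall fun x => by
    exact Real.rpow_nonneg (abs_nonneg _) _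
  have holder := integral_mul_le_Lp_mul_Lq_of_nonneg hconj hFnn hGnn hF' hG'
  -- identify the three integrals
  have eFG : ∀ x, F x * G x = |f x| ^ q := by
    intro x
    show |f x| ^ (2 / r) * |f x| ^ (p / r') = _
    rw [← Real.rpow_add' (abs_nonneg _) (by positivity : (0:ℝ) < 2/r + p/r').ne']
    congr 1
    rw [hr, hr']; field_simp; ring
  have eF : ∀ x, F x ^ r = |f x| ^ (2:ℝ) := by
    intro x
    show (|f x| ^ (2 / r)) ^ r = _
    rw [← Real.rpow_mul (abs_nonneg _)]
    congr 1
    field_simp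
  have eG : ∀ x, G x ^ r' = |f x| ^ p := by
    intro x
    show (|f x| ^ (p / r')) ^ r' = _
    rw [← Real.rpow_mul (abs_nonneg _)]
    congr 1
    field_simp
  simp only [eFG, eF, eG] at holder
  set A := ∫ x, |f x| ^ (2:ℝ) ∂μ with hA
  set Ip := ∫ x, |f x| ^ p ∂μ with hIp
  set Iq := ∫ x, |f x| ^ q ∂μ with hIq
  have hAnn : 0 ≤ A := integral_nonneg fun x => Real.rpow_nonneg (abs_nonneg _) _
  have hIpnn : 0 ≤ Ip := integral_nonneg fun x => Real.rpow_nonneg (abs_nonneg _) _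
  have hIqnn : 0 ≤ Iq := integral_nonneg fun x => Real.rpow_nonneg (abs_nonneg _) _
  have step1 : Iq ^ (2/q) ≤ (A ^ (1/r) * Ip ^ (1/r')) ^ (2/q) :=
    Real.rpow_le_rpow hIqnn holder (by positivity)
  have step2 : (A ^ (1/r) * Ip ^ (1/r')) ^ (2/q)
      = A ^ (2*(q-p)/(q*(2-p))) * (Ip ^ (2/p)) ^ (p*(2-q)/(q*(2-p))) := by
    rw [Real.mul_rpow (Real.rpow_nonneg hAnn _) (Real.rpow_nonneg hIpnn _),
      ← Real.rpow_mul hAnn, ← Real.rpow_mul hIpnn, ← Real.rpow_mul hIpnn]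
    congr 1
    · congr 1
      rw [hr]; field_simp
    · congr 1
      rw [hr']; field_simp
  have step3 : A ^ (2*(q-p)/(q*(2-p))) * (Ip ^ (2/p)) ^ (p*(2-q)/(q*(2-p)))
      ≤ (2*(q-p)/(q*(2-p))) * A + (p*(2-q)/(q*(2-p))) * Ip ^ (2/p) := by
    refine Real.geom_mean_le_arith_mean2_weighted (by positivity) (by positivity)
      hAnn (Real.rpow_nonneg hIpnn _) ?_
    field_simp
    ring
  calc Iq ^ (2/q) ≤ (A ^ (1/r) * Ip ^ (1/r')) ^ (2/q) := step1
    _ = _ := step2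
    _ ≤ _ := step3

end aux

/-- Monotonicity in `p` of the functional
`p ↦ (2p/(2-p)) (∫ |f|² dμ - (∫ |f|ᵖ dμ)^{2/p})` on `[1,2)` for `f ∈ L²(μ)`,
`μ` a probability measure (Latała–Oleszkiewicz). -/
theorem latala_oleszkiewicz_monotone (d : ℕ) (hd : 1 ≤ d)
    (μ : Measure (EuclideanSpace ℝ (Fin d))) [IsProbabilityMeasure μ]
    (f : EuclideanSpace ℝ (Fin d) → ℝ) (hf : MemLp f 2 μ) :
    MonotoneOn
      (fun p : ℝ => (2 * p / (2 - p)) *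
        ((∫ x, |f x| ^ (2 : ℝ) ∂μ) - (∫ x, |f x| ^ p ∂μ) ^ (2 / p)))
      (Set.Ico (1 : ℝ) 2) := by
  intro p hp q hq hpq
  rcases eq_or_lt_of_le hpq with rfl | hlt
  · exact le_refl _
  obtain ⟨hp1, hp2⟩ := hp
  obtain ⟨hq1, hq2⟩ := hq
  have h2p : (0:ℝ) < 2 - p := by linarith
  have h2q : (0:ℝ) < 2 - q := by linarith
  have hqp : (0:ℝ) < q - p := by linarith
  have hq0 : (0:ℝ) < q := by linarith
  have interp := lo_interp f hf hp1 hlt hq2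
  simp only
  set A := ∫ x, |f x| ^ (2:ℝ) ∂μ with hA
  set Np := (∫ x, |f x| ^ p ∂μ) ^ (2/p) with hNp
  set Nq := (∫ x, |f x| ^ q ∂μ) ^ (2/q) with hNq
  have hc : (0:ℝ) < q * (2 - p) := by positivity
  have hmul : q * (2 - p) * Nq ≤ 2 * (q - p) * A + p * (2 - q) * Np := by
    have h := mul_le_mul_of_nonneg_left interp hc.le
    have he : q * (2 - p) * ((2 * (q - p) / (q * (2 - p))) * A +
        (p * (2 - q) / (q * (2 - p))) * Np) = 2 * (q - p) * A + p * (2 - q) * Np := by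
      field_simp
    rw [he] at h
    exact h
  rw [div_mul_eq_mul_div, div_mul_eq_mul_div, div_le_div_iff₀ h2p h2q]
  linarith
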